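/- Let N = 2^n̄, F the N×N discrete Fourier basis and Ψ_{1D} the N×N 1D Haar wavelet basis. Then the local coherence μ_l^{loc}(F*Ψ_{1D}) := max_j |(F*Ψ_{1D})_{l,j}| satisfies μ_l^{loc} ≤ √2 · min{1, |l - N/2|^{-1/2}} for all l ∈ {1,...,N} (with the frequency indexed so that l = N/2 corresponds to zero frequency). -/

import Mathlib

noncomputable section

/-- The 1D Haar scaling function `ψ(t) = 2^{-n̄/2}` on `{0,…,2^n̄-1}`. -/
def haarScaling (nb : ℕ) : ℕ → ℝ := fun _ => (2 : ℝ) ^ (-(nb : ℝ) / 2)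

/-- The 1D discrete Haar wavelet `h_{n,l}` at resolution `n` and position `l`,
on the grid `{0,…,2^n̄-1}`. -/
def haarWavelet (nb n l : ℕ) : ℕ → ℝ := fun t =>
  if l * 2 ^ (nb - n) ≤ t ∧ 2 * t < (2 * l + 1) * 2 ^ (nb - n) then
    (2 : ℝ) ^ (((n : ℝ) - nb) / 2)
  else if (2 * l + 1) * 2 ^ (nb - n) ≤ 2 * t ∧ t < (l + 1) * 2 ^ (nb - n) then
    -((2 : ℝ) ^ (((n : ℝ) - nb) / 2))
  else 0

/-- Index set of the 1D Haar wavelet basis of `ℂ^{2^n̄}`: the scaling function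
together with the wavelets `h_{n,l}`, `0 ≤ n ≤ n̄-1`, `0 ≤ l ≤ 2^n - 1`. -/
abbrev HaarIndex (nb : ℕ) := Unit ⊕ (Σ n : Fin nb, Fin (2 ^ (n : ℕ)))

/-- The 1D Haar wavelet basis functions, indexed by `HaarIndex`. -/
def haarFn (nb : ℕ) : HaarIndex nb → ℕ → ℝ
  | Sum.inl _ => haarScaling nb
  | Sum.inr ⟨n, l⟩ => haarWavelet nb n l

end

noncomputable section

/-- The 1D discrete Fourier basis element `φ_k(t) = N^{-1/2} e^{2πi k t / N}`
with `N = 2^n̄`. -/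
def fourierFn (nb : ℕ) (k : ℤ) (t : ℕ) : ℂ :=
  (Real.sqrt (2 ^ nb) : ℂ)⁻¹ *
    Complex.exp (2 * Real.pi * Complex.I * k * t / (2 ^ nb))

end

open Finset

namespace FHaux

open Real

lemma abs_one_sub_exp (x : ℝ) :
    ‖1 - Complex.exp (x * Complex.I)‖ = 2 * |Real.sin (x / 2)| := by
  rw [Complex.exp_mul_I, ← Complex.ofReal_cos, ← Complex.ofReal_sin, Complex.norm_def,
    Complex.normSq_apply]
  have h1 := Real.sin_sq_add_cos_sq x
  have h2 := Real.sin_sq_eq_half_sub (x / 2)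
  rw [show 2 * (x / 2) = x by ring] at h2
  have key : ((1 : ℂ) - (↑(Real.cos x) + ↑(Real.sin x) * Complex.I)).re ^ 2 +
      ((1 : ℂ) - (↑(Real.cos x) + ↑(Real.sin x) * Complex.I)).im ^ 2
      = (2 * |Real.sin (x / 2)|) ^ 2 := by
    simp only [Complex.sub_re, Complex.sub_im, Complex.add_re, Complex.add_im, Complex.one_re,
      Complex.one_im, Complex.mul_re, Complex.mul_im, Complex.I_re, Complex.I_im,
      Complex.ofReal_re, Complex.ofReal_im, mul_zero, mul_one, zero_sub, zero_mul, zero_add,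
      sub_zero]
    nlinarith [h1, h2, sq_abs (Real.sin (x / 2))]
  rw [show ∀ z : ℂ, z.re * z.re + z.im * z.im = z.re ^ 2 + z.im ^ 2 by intro z; ring, key,
    Real.sqrt_sq_eq_abs, abs_of_nonneg (by positivity)]

lemma conj_fourier (nb : ℕ) (k : ℤ) (t : ℕ) :
    (starRingEnd ℂ) (fourierFn nb k t) =
      (Real.sqrt (2 ^ nb) : ℂ)⁻¹ *
        Complex.exp ((↑(-(2 * Real.pi * k / 2 ^ nb)) : ℂ) * Complex.I) ^ t := by
  rw [fourierFn, map_mul, ← Complex.exp_nat_mul, map_inv₀, Complex.conj_ofReal,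
    ← Complex.exp_conj]
  congr 1
  simp only [map_div₀, map_mul, Complex.conj_I, map_ofNat, Complex.conj_ofReal,
    map_intCast, map_natCast, map_pow]
  push_cast
  ring

lemma wavelet_sum (nb n : ℕ) (hn : n < nb) (l' : ℕ) (hl' : l' < 2 ^ n) (z : ℂ) :
    ∑ t ∈ range (2 ^ nb), z ^ t * (haarWavelet nb n l' t : ℂ) =
      (((2 : ℝ) ^ (((n : ℝ) - nb) / 2) : ℝ) : ℂ) *
        (z ^ (l' * 2 ^ (nb - n)) * (1 - z ^ 2 ^ (nb - n - 1)) *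
          ∑ t ∈ range (2 ^ (nb - n - 1)), z ^ t) := by
  set m : ℕ := 2 ^ (nb - n - 1) with hm
  set a : ℕ := l' * 2 ^ (nb - n) with ha
  have h2m : 2 ^ (nb - n) = 2 * m := by
    rw [hm, ← pow_succ']
    congr 1
    omega
  have e1 : (2 * l' + 1) * 2 ^ (nb - n) = 2 * a + 2 * m := by simp only [ha, h2m]; ring
  have e2 : (l' + 1) * 2 ^ (nb - n) = a + 2 * m := by simp only [ha, h2m]; ring
  have hsupp : a + 2 * m ≤ 2 ^ nb := by
    have h3 : (l' + 1) * 2 ^ (nb - n) ≤ 2 ^ n * 2 ^ (nb - n) :=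
      Nat.mul_le_mul_right _ (by omega)
    rw [← pow_add] at h3
    have hnb : n + (nb - n) = nb := by omega
    rw [hnb, e2] at h3
    exact h3
  set c : ℝ := (2 : ℝ) ^ (((n : ℝ) - nb) / 2) with hc
  have hrestrict : ∑ t ∈ range (2 ^ nb), z ^ t * (haarWavelet nb n l' t : ℂ) =
      ∑ t ∈ Finset.Ico a (a + 2 * m), z ^ t * (haarWavelet nb n l' t : ℂ) := by
    refine (Finset.sum_subset ?_ ?_).symm
    · intro t ht
      simp only [Finset.mem_Ico] at ht
      simp only [Finset.mem_range]
      omega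
    · intro t _ ht
      simp only [Finset.mem_Ico, not_and_or, not_le, not_lt] at ht
      have hw : haarWavelet nb n l' t = 0 := by
        rw [haarWavelet]
        rw [if_neg, if_neg] <;> simp only [e1, e2] <;> omega
      rw [hw]
      simp
  rw [hrestrict, ← Finset.sum_Ico_consecutive _ (by omega : a ≤ a + m)
    (by omega : a + m ≤ a + 2 * m)]
  have hpos : ∀ t ∈ Finset.Ico a (a + m), z ^ t * (haarWavelet nb n l' t : ℂ) = (c : ℂ) * z ^ t := by
    intro t ht
    simp only [Finset.mem_Ico] at ht
    rw [haarWavelet]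
    rw [if_pos (by simp only [e1]; omega)]
    ring
  have hneg : ∀ t ∈ Finset.Ico (a + m) (a + 2 * m),
      z ^ t * (haarWavelet nb n l' t : ℂ) = -((c : ℂ) * z ^ t) := by
    intro t ht
    simp only [Finset.mem_Ico] at ht
    rw [haarWavelet]
    rw [if_neg (by simp only [e1]; omega), if_pos (by simp only [e1, e2]; omega)]
    push_cast
    ring
  rw [Finset.sum_congr rfl hpos, Finset.sum_congr rfl hneg]
  rw [← Finset.mul_sum, Finset.sum_neg_distrib, ← Finset.mul_sum]
  have g1 : ∑ t ∈ Finset.Ico a (a + m), z ^ t = z ^ a * ∑ t ∈ range m, z ^ t := by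
    rw [Finset.sum_Ico_eq_sum_range]
    simp only [add_tsub_cancel_left]
    rw [Finset.mul_sum]
    exact Finset.sum_congr rfl fun i _ => by rw [pow_add]
  have g2 : ∑ t ∈ Finset.Ico (a + m) (a + 2 * m), z ^ t =
      z ^ a * z ^ m * ∑ t ∈ range m, z ^ t := by
    rw [Finset.sum_Ico_eq_sum_range]
    have h4 : a + 2 * m - (a + m) = m := by omega
    rw [h4, Finset.mul_sum]
    refine Finset.sum_congr rfl fun i _ => ?_
    rw [show a + m + i = a + (m + i) by ring, pow_add, pow_add]
    ring
  rw [g1, g2]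
  ring

lemma rpow_half_nat (j : ℕ) : (2 : ℝ) ^ ((j : ℝ) / 2) = Real.sqrt (2 ^ j) := by
  rw [Real.sqrt_eq_rpow, ← Real.rpow_natCast 2 j, ← Real.rpow_mul (by norm_num)]
  congr 1
  ring

lemma c_eq (n nb : ℕ) :
    (2 : ℝ) ^ (((n : ℝ) - nb) / 2) = Real.sqrt (2 ^ n) / Real.sqrt (2 ^ nb) := by
  rw [show ((n : ℝ) - nb) / 2 = (n : ℝ) / 2 - (nb : ℝ) / 2 by ring,
    Real.rpow_sub (by norm_num), rpow_half_nat, rpow_half_nat]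

/-- `ω = exp(-2πik/2^nb · I)` is not `1` when `0 < |k|`, `2|k| ≤ 2^nb`. -/
lemma omega_ne_one (nb : ℕ) (k : ℤ) (hk : k ≠ 0) (hk2 : 2 * |k| ≤ 2 ^ nb) :
    Complex.exp ((↑(-(2 * Real.pi * k / 2 ^ nb)) : ℂ) * Complex.I) ≠ 1 := by
  intro h
  rw [Complex.exp_eq_one_iff] at h
  obtain ⟨j, hj⟩ := h
  have hj' : ((-(2 * Real.pi * k / 2 ^ nb) : ℝ) : ℂ) = ((j * (2 * Real.pi) : ℝ) : ℂ) := by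
    have hI : ((j : ℂ) * (2 * ↑Real.pi * Complex.I)) = ((j * (2 * Real.pi) : ℝ) : ℂ) * Complex.I := by
      push_cast
      ring
    rw [hI] at hj
    exact mul_right_cancel₀ Complex.I_ne_zero hj
  have hr : -(2 * Real.pi * k / 2 ^ nb) = j * (2 * Real.pi) := by exact_mod_cast hj'
  have hN : (0 : ℝ) < 2 ^ nb := by positivity
  have hkr : (k : ℝ) = -j * 2 ^ nb := by
    have hπ : Real.pi ≠ 0 := Real.pi_ne_zero
    field_simp at hr
    nlinarith [hr, Real.pi_pos]
  have hkz : k = -j * 2 ^ nb := by exact_mod_cast hkr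
  have hP : (1 : ℤ) ≤ 2 ^ nb := one_le_pow₀ one_le_two
  have habs : |k| = |j| * 2 ^ nb := by
    rw [hkz, abs_mul, abs_neg, abs_pow]
    norm_num
  rcases eq_or_ne j 0 with rfl | hj0
  · exact hk (by simpa using hkz)
  · have : (1 : ℤ) ≤ |j| := Int.one_le_abs hj0
    nlinarith [habs, hk2, hP]

lemma omega_pow_N (nb : ℕ) (k : ℤ) :
    Complex.exp ((↑(-(2 * Real.pi * k / 2 ^ nb)) : ℂ) * Complex.I) ^ (2 ^ nb : ℕ) = 1 := by
  rw [← Complex.exp_nat_mul]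
  have hN : ((2 : ℝ) ^ nb) ≠ 0 := by positivity
  have harg : ((2 ^ nb : ℕ) : ℂ) * ((↑(-(2 * Real.pi * k / 2 ^ nb)) : ℂ) * Complex.I)
      = (-k : ℤ) * (2 * Real.pi * Complex.I) := by
    push_cast
    field_simp
  rw [harg, Complex.exp_int_mul_two_pi_mul_I]

/-- The scaling-function column: value `1` at zero frequency. -/
lemma scaling_abs_k0 (nb : ℕ) :
    ‖∑ t ∈ range (2 ^ nb),
      (starRingEnd ℂ) (fourierFn nb 0 t) * (haarScaling nb t : ℂ)‖ = 1 := by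
  have hterm : ∀ t : ℕ, (starRingEnd ℂ) (fourierFn nb 0 t) * (haarScaling nb t : ℂ)
      = ((Real.sqrt (2 ^ nb))⁻¹ * (2 : ℝ) ^ (-(nb : ℝ) / 2) : ℝ) := by
    intro t
    rw [conj_fourier, haarScaling]
    push_cast
    norm_num
  rw [Finset.sum_congr rfl fun t _ => hterm t, Finset.sum_const, Finset.card_range]
  have h1 : (2 : ℝ) ^ (-(nb : ℝ) / 2) = (Real.sqrt (2 ^ nb))⁻¹ := by
    rw [show (-(nb : ℝ) / 2) = -((nb : ℝ) / 2) by ring, Real.rpow_neg (by norm_num),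
      rpow_half_nat]
  have hs : Real.sqrt ((2 : ℝ) ^ nb) > 0 := Real.sqrt_pos.2 (by positivity)
  have hs2 : Real.sqrt ((2 : ℝ) ^ nb) ^ 2 = 2 ^ nb := Real.sq_sqrt (by positivity)
  rw [h1, nsmul_eq_mul]
  have hr : ((2 ^ nb : ℕ) : ℝ) * ((Real.sqrt (2 ^ nb))⁻¹ * (Real.sqrt (2 ^ nb))⁻¹) = 1 := by
    push_cast
    field_simp
    rw [hs2]
  have hc : ((2 ^ nb : ℕ) : ℂ) * (((Real.sqrt (2 ^ nb))⁻¹ * (Real.sqrt (2 ^ nb))⁻¹ : ℝ) : ℂ) = 1 := by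
    rw [show ((2 ^ nb : ℕ) : ℂ) = (((2 ^ nb : ℕ) : ℝ) : ℂ) by push_cast; ring,
      ← Complex.ofReal_mul, hr]
    norm_num
  rw [hc]
  simp

/-- The scaling-function column vanishes at nonzero frequency. -/
lemma scaling_abs_ne (nb : ℕ) (k : ℤ) (hk : k ≠ 0) (hk2 : 2 * |k| ≤ 2 ^ nb) :
    ‖∑ t ∈ range (2 ^ nb),
      (starRingEnd ℂ) (fourierFn nb k t) * (haarScaling nb t : ℂ)‖ = 0 := by
  set ω : ℂ := Complex.exp ((↑(-(2 * Real.pi * k / 2 ^ nb)) : ℂ) * Complex.I) with hω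
  have hsum : ∑ t ∈ range (2 ^ nb), (starRingEnd ℂ) (fourierFn nb k t) * (haarScaling nb t : ℂ)
      = (Real.sqrt (2 ^ nb) : ℂ)⁻¹ * ((2 : ℝ) ^ (-(nb : ℝ) / 2) : ℝ) *
        ∑ t ∈ range (2 ^ nb), ω ^ t := by
    rw [Finset.mul_sum]
    refine Finset.sum_congr rfl fun t _ => ?_
    rw [conj_fourier, haarScaling]
    ring
  rw [hsum, geom_sum_eq (omega_ne_one nb k hk hk2), ← hω, omega_pow_N]
  simp


lemma sq_le_four {E : ℝ} (h0 : 0 ≤ E) (h2 : E ≤ 2) : E ^ 2 ≤ 4 := by nlinarith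

lemma pi_sq_le_16 : Real.pi ^ 2 ≤ 16 := by nlinarith [Real.pi_le_four, Real.pi_pos]

lemma algebra1 {sn mR : ℝ} (hsn : 0 < sn) (hm : 0 < mR) :
    sn / (sn ^ 2 * (2 * mR)) * (2 * mR) = 1 / sn := by
  field_simp

set_option maxHeartbeats 1600000 in
lemma wavelet_abs_bound (nb : ℕ) (k : ℤ) (hk2 : 2 * |k| ≤ 2 ^ nb)
    (n : ℕ) (hn : n < nb) (l' : ℕ) (hl' : l' < 2 ^ n) :
    ‖∑ t ∈ range (2 ^ nb),
        (starRingEnd ℂ) (fourierFn nb k t) * (haarWavelet nb n l' t : ℂ)‖ ≤ 1 ∧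
      (k ≠ 0 → ‖∑ t ∈ range (2 ^ nb),
        (starRingEnd ℂ) (fourierFn nb k t) * (haarWavelet nb n l' t : ℂ)‖ ≤
          Real.sqrt 2 * (Real.sqrt |(k : ℝ)|)⁻¹) := by
  set x : ℝ := -(2 * Real.pi * k / 2 ^ nb) with hxdef
  set ω : ℂ := Complex.exp ((x : ℂ) * Complex.I) with hω
  set m : ℕ := 2 ^ (nb - n - 1) with hmdef
  set c : ℝ := (2 : ℝ) ^ (((n : ℝ) - nb) / 2) with hcdef
  set GS : ℂ := ∑ t ∈ range m, ω ^ t with hGS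
  set g : ℝ := ‖GS‖ with hg
  set E : ℝ := ‖1 - ω ^ m‖ with hE
  have hNpos : (0 : ℝ) < 2 ^ nb := by positivity
  have hc_pos : 0 < c := Real.rpow_pos_of_pos (by norm_num) _
  -- the sum in closed form
  have hsum : ∑ t ∈ range (2 ^ nb),
      (starRingEnd ℂ) (fourierFn nb k t) * (haarWavelet nb n l' t : ℂ) =
      (Real.sqrt (2 ^ nb) : ℂ)⁻¹ *
        ((c : ℂ) * (ω ^ (l' * 2 ^ (nb - n)) * (1 - ω ^ m) * GS)) := by
    rw [← wavelet_sum nb n hn l' hl' ω, Finset.mul_sum]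
    refine Finset.sum_congr rfl fun t _ => ?_
    rw [conj_fourier]
    ring
  -- absolute value in closed form
  have habs : ‖∑ t ∈ range (2 ^ nb),
      (starRingEnd ℂ) (fourierFn nb k t) * (haarWavelet nb n l' t : ℂ)‖ =
      (Real.sqrt (2 ^ nb))⁻¹ * c * (E * g) := by
    rw [hsum, norm_mul, norm_mul, norm_mul, norm_mul, norm_pow, Complex.norm_exp_ofReal_mul_I,
      one_pow, norm_inv, Complex.norm_real, Complex.norm_real, Real.norm_eq_abs, Real.norm_eq_abs,
      abs_of_nonneg (Real.sqrt_nonneg _), abs_of_nonneg hc_pos.le]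
    rw [hE, hg]
    ring
  set sn : ℝ := Real.sqrt (2 ^ n) with hsn
  have hsn_pos : 0 < sn := Real.sqrt_pos.2 (by positivity)
  have hsn_sq : sn ^ 2 = 2 ^ n := Real.sq_sqrt (by positivity)
  have hsn_ge1 : 1 ≤ sn := Real.one_le_sqrt.2 (one_le_pow₀ (by norm_num)) 
  have hA : (Real.sqrt (2 ^ nb))⁻¹ * c = sn / 2 ^ nb := by
    rw [hcdef, c_eq, ← hsn]
    have hq : Real.sqrt ((2:ℝ) ^ nb) * Real.sqrt ((2:ℝ) ^ nb) = 2 ^ nb :=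
      Real.mul_self_sqrt (by positivity)
    have hsqpos : 0 < Real.sqrt ((2:ℝ) ^ nb) := Real.sqrt_pos.2 (by positivity)
    field_simp
    rw [Real.sq_sqrt (by positivity)]
  have hNsplit : ((2 : ℝ) ^ nb) = 2 ^ n * (2 * m) := by
    have h1 : (2:ℕ) ^ (nb - n) = 2 * m := by
      rw [hmdef, ← pow_succ']
      congr 1
      omega
    have h2 : (2:ℕ) ^ n * 2 ^ (nb - n) = 2 ^ nb := by
      rw [← pow_add]
      congr 1
      omega
    rw [h1] at h2
    exact_mod_cast h2.symm
  have hm_pos : (0 : ℝ) < (m : ℝ) := by positivity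
  have hg_le : g ≤ m := by
    rw [hg, hGS]
    calc ‖∑ t ∈ range m, ω ^ t‖ ≤ ∑ t ∈ range m, ‖ω ^ t‖ :=
          norm_sum_le _ _
    _ = ∑ t ∈ range m, 1 := by
          refine Finset.sum_congr rfl fun t _ => ?_
          rw [norm_pow, hω, Complex.norm_exp_ofReal_mul_I, one_pow]
    _ = m := by simp
  have hg_nonneg : 0 ≤ g := norm_nonneg _
  have hE_nonneg : 0 ≤ E := norm_nonneg _
  have hωm : ω ^ m = Complex.exp ((((m : ℝ) * x : ℝ)) * Complex.I) := by
    rw [hω, ← Complex.exp_nat_mul]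
    congr 1
    push_cast
    ring
  have hE_eq : E = 2 * |Real.sin ((m : ℝ) * x / 2)| := by
    rw [hE, hωm, abs_one_sub_exp]
  have hE_le2 : E ≤ 2 := by
    rw [hE_eq]
    have h9 := Real.abs_sin_le_one ((m : ℝ) * x / 2)
    linarith only [h9]
  -- part 1
  have part1 : ‖∑ t ∈ range (2 ^ nb),
      (starRingEnd ℂ) (fourierFn nb k t) * (haarWavelet nb n l' t : ℂ)‖ ≤ 1 := by
    rw [habs, hA]
    have h1 : E * g ≤ 2 * m := by
      calc E * g ≤ 2 * g := mul_le_mul_of_nonneg_right hE_le2 hg_nonneg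
      _ ≤ 2 * m := by linarith only [hg_le]
    calc sn / 2 ^ nb * (E * g) ≤ sn / 2 ^ nb * (2 * m) := by
          apply mul_le_mul_of_nonneg_left h1
          positivity
    _ = 1 / sn := by
          rw [hNsplit, ← hsn_sq]
          exact algebra1 hsn_pos hm_pos
    _ ≤ 1 := by
          rw [div_le_one hsn_pos]
          exact hsn_ge1
  refine ⟨part1, fun hk => ?_⟩
  -- part 2 : k ≠ 0
  have hk_abs1 : (1 : ℝ) ≤ |(k : ℝ)| := by
    have : (1 : ℤ) ≤ |k| := Int.one_le_abs hk
    calc (1:ℝ) ≤ ((|k| : ℤ) : ℝ) := by exact_mod_cast this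
    _ = |(k : ℝ)| := by push_cast; ring
  have hk_pos : (0 : ℝ) < |(k : ℝ)| := by linarith
  set sk : ℝ := Real.sqrt |(k : ℝ)| with hsk
  have hsk_pos : 0 < sk := Real.sqrt_pos.2 hk_pos
  have hsk_sq : sk ^ 2 = |(k : ℝ)| := Real.sq_sqrt hk_pos.le
  set s2 : ℝ := Real.sqrt 2 with hs2
  have hs2_pos : 0 < s2 := Real.sqrt_pos.2 (by norm_num)
  have hs2_sq : s2 ^ 2 = 2 := Real.sq_sqrt (by norm_num)
  have hk2R : 2 * |(k : ℝ)| ≤ 2 ^ nb := by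
    have := hk2
    calc 2 * |(k:ℝ)| = ((2 * |k| : ℤ) : ℝ) := by push_cast; ring
    _ ≤ (((2:ℤ) ^ nb : ℤ) : ℝ) := by exact_mod_cast this
    _ = 2 ^ nb := by push_cast; ring
  -- lower bound on |1 - ω|
  set D : ℝ := ‖1 - ω‖ with hD
  have hD_eq : D = 2 * |Real.sin (x / 2)| := by rw [hD, hω, abs_one_sub_exp]
  have hx2 : x / 2 = -(Real.pi * k / 2 ^ nb) := by rw [hxdef]; ring
  have hx2_abs : |x / 2| = Real.pi * |(k : ℝ)| / 2 ^ nb := by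
    rw [hx2, abs_neg, abs_div, abs_mul, abs_of_nonneg Real.pi_pos.le,
      abs_of_nonneg hNpos.le]
  have hx2_le : |x / 2| ≤ Real.pi / 2 := by
    rw [hx2_abs]
    rw [div_le_div_iff₀ hNpos (by norm_num : (0:ℝ) < 2)]
    have h9 := mul_le_mul_of_nonneg_left hk2R Real.pi_pos.le
    ring_nf at h9 ⊢
    linarith only [h9]
  have hD_low : 4 * |(k : ℝ)| / 2 ^ nb ≤ D := by
    rw [hD_eq]
    have := Real.mul_abs_le_abs_sin hx2_le
    rw [hx2_abs] at this
    have hpi := Real.pi_pos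
    calc 4 * |(k:ℝ)| / 2 ^ nb = 2 * (2 / Real.pi * (Real.pi * |(k:ℝ)| / 2 ^ nb)) := by
          field_simp
          ring
    _ ≤ 2 * |Real.sin (x / 2)| := by linarith only [this]
  have hD_pos : 0 < D := lt_of_lt_of_le (by positivity) hD_low
  -- geometric sum closed form
  have hg_eq : g = E / D := by
    rw [hg, hGS, geom_sum_eq (omega_ne_one nb k hk hk2), norm_div, hE, hD,
      norm_sub_rev (ω ^ m) 1, norm_sub_rev ω 1]
  -- the fine upper bound on E
  have hE_lin : E ≤ 2 * Real.pi * m * |(k : ℝ)| / 2 ^ nb := by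
    rw [hE_eq]
    have h1 : |Real.sin ((m:ℝ) * x / 2)| ≤ |(m:ℝ) * x / 2| := Real.abs_sin_le_abs
    have h2 : |(m:ℝ) * x / 2| = (m:ℝ) * Real.pi * |(k:ℝ)| / 2 ^ nb := by
      rw [show (m:ℝ) * x / 2 = -((m:ℝ) * Real.pi * k / 2 ^ nb) by rw [hxdef]; ring,
        abs_neg, abs_div, abs_mul, abs_mul, abs_of_nonneg hm_pos.le,
        abs_of_nonneg Real.pi_pos.le, abs_of_nonneg hNpos.le]
    rw [h2] at h1
    ring_nf at h1 ⊢
    linarith only [h1]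
  clear_value x ω m c GS g E sn sk s2 D
  rw [habs, hA, hg_eq]
  rcases le_or_gt ((2:ℝ) ^ n) (2 * |(k:ℝ)|) with hcase | hcase
  · -- coarse case : 2^n ≤ 2|k|
    have step1 : E * (E / D) ≤ 2 ^ nb / |(k:ℝ)| := by
      have e1 : E * (E / D) = E ^ 2 / D := by ring
      rw [e1]
      have hEsq : E ^ 2 ≤ 4 := sq_le_four hE_nonneg hE_le2
      calc E ^ 2 / D ≤ 4 / D := by gcongr
      _ ≤ 4 / (4 * |(k:ℝ)| / 2 ^ nb) := by gcongr
      _ = 2 ^ nb / |(k:ℝ)| := by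
            field_simp
    have hsn_le : sn ≤ s2 * sk := by
      rw [hsn, hs2, hsk]
      calc Real.sqrt ((2:ℝ) ^ n) ≤ Real.sqrt (2 * |(k:ℝ)|) := Real.sqrt_le_sqrt hcase
      _ = Real.sqrt 2 * Real.sqrt |(k:ℝ)| := Real.sqrt_mul (by norm_num) _
    calc sn / 2 ^ nb * (E * (E / D)) ≤ sn / 2 ^ nb * (2 ^ nb / |(k:ℝ)|) := by
          apply mul_le_mul_of_nonneg_left step1
          positivity
    _ = sn / |(k:ℝ)| := by field_simp
    _ ≤ s2 * sk⁻¹ := by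
          have hq : s2 * sk⁻¹ * |(k:ℝ)| = s2 * sk := by
            rw [← hsk_sq, pow_two]
            calc s2 * sk⁻¹ * (sk * sk) = s2 * ((sk⁻¹ * sk) * sk) := by ring
            _ = s2 * sk := by rw [inv_mul_cancel₀ hsk_pos.ne', one_mul]
          rw [div_le_iff₀ hk_pos, hq]
          exact hsn_le
  · -- fine case : 2|k| < 2^n
    have hpi_sq : Real.pi ^ 2 ≤ 16 := pi_sq_le_16
    have step1 : E * (E / D) ≤ Real.pi ^ 2 * (m:ℝ) ^ 2 * |(k:ℝ)| / 2 ^ nb := by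
      have e1 : E * (E / D) = E ^ 2 / D := by ring
      rw [e1]
      calc E ^ 2 / D ≤ (2 * Real.pi * m * |(k:ℝ)| / 2 ^ nb) ^ 2 / (4 * |(k:ℝ)| / 2 ^ nb) := by
            gcongr <;> first | exact hD_low | exact hE_nonneg | exact hE_lin | positivity
      _ = Real.pi ^ 2 * (m:ℝ) ^ 2 * |(k:ℝ)| / 2 ^ nb := by
            field_simp
            ring
    have hsn_ge : s2 * sk ≤ sn := by
      rw [hsn, hs2, hsk, ← Real.sqrt_mul (by norm_num : (0:ℝ) ≤ 2)]
      exact Real.sqrt_le_sqrt hcase.le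
    calc sn / 2 ^ nb * (E * (E / D))
        ≤ sn / 2 ^ nb * (Real.pi ^ 2 * (m:ℝ) ^ 2 * |(k:ℝ)| / 2 ^ nb) := by
          apply mul_le_mul_of_nonneg_left step1
          positivity
    _ = Real.pi ^ 2 * |(k:ℝ)| / (4 * sn ^ 3) := by
          rw [hNsplit, ← hsn_sq]
          field_simp
          ring
    _ ≤ 16 * |(k:ℝ)| / (4 * sn ^ 3) := by
          gcongr
    _ ≤ s2 * sk⁻¹ := by
          rw [div_le_iff₀ (by positivity), ← hsk_sq]
          have h3 : (s2 * sk) ^ 3 ≤ sn ^ 3 := by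
            apply pow_le_pow_left₀ (by positivity) hsn_ge
          have h4 : s2 * (s2 * sk) ^ 3 = 4 * sk ^ 3 := by
            linear_combination (s2 ^ 2 + 2) * sk ^ 3 * hs2_sq
          have h6 : s2 * (s2 * sk) ^ 3 ≤ s2 * sn ^ 3 :=
            mul_le_mul_of_nonneg_left h3 hs2_pos.le
          have h7 : s2 * sk⁻¹ * (4 * sn ^ 3) = 4 * (s2 * sn ^ 3) * sk⁻¹ := by ring
          rw [h7]
          have h8 : 4 * sk ^ 3 ≤ s2 * sn ^ 3 := by linarith only [h4, h6]
          calc 16 * sk ^ 2 = 4 * (4 * sk ^ 3) * sk⁻¹ := by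
                field_simp
                ring
          _ ≤ 4 * (s2 * sn ^ 3) * sk⁻¹ := by
                gcongr

end FHaux

open FHaux in
/-- local coherence of the discrete Fourier basis with the 1D Haar
wavelet basis: `μ_l^{loc}(F*Ψ₁D) ≤ √2 · min{1, |l - N/2|^{-1/2}}`, the frequency
being indexed so that `l = N/2` corresponds to zero frequency (for `l = N/2` the
bound `√2 · min{1, ∞} = √2` applies). -/
theorem fourier_haar_local_coherence_bound (nb : ℕ) (hnb : 1 ≤ nb)
    (l : ℕ) (hl1 : 1 ≤ l) (hlN : l ≤ 2 ^ nb) :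
    Finset.univ.sup' ⟨Sum.inl (), Finset.mem_univ _⟩
        (fun i : HaarIndex nb =>
          ‖∑ t ∈ Finset.range (2 ^ nb),
            (starRingEnd ℂ) (fourierFn nb ((l : ℤ) - 2 ^ (nb - 1)) t) *
              (haarFn nb i t : ℂ)‖) ≤
      Real.sqrt 2 *
        (if l = 2 ^ (nb - 1) then 1
          else min 1 (Real.sqrt |(l : ℝ) - 2 ^ (nb - 1)|)⁻¹) := by
  set k : ℤ := (l : ℤ) - 2 ^ (nb - 1) with hkdef
  have hpow : (2 : ℤ) ^ nb = 2 * 2 ^ (nb - 1) := by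
    rw [← pow_succ']
    congr 1
    omega
  have hlZ : ((l : ℤ)) ≤ 2 ^ nb := by exact_mod_cast hlN
  have hl1Z : (1 : ℤ) ≤ (l : ℤ) := by exact_mod_cast hl1
  have hk2 : 2 * |k| ≤ 2 ^ nb := by
    have habs : |k| ≤ 2 ^ (nb - 1) := by
      rw [abs_le]
      constructor
      · rw [hkdef]
        have : (0:ℤ) ≤ (l:ℤ) := by linarith
        linarith
      · rw [hkdef]
        linarith [hpow, hlZ]
    linarith [hpow]
  apply Finset.sup'_le
  intro i _
  have hs2_ge1 : (1:ℝ) ≤ Real.sqrt 2 := by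
    rw [show (1:ℝ) = Real.sqrt 1 by simp]
    exact Real.sqrt_le_sqrt (by norm_num)
  by_cases hcase : l = 2 ^ (nb - 1)
  · -- zero frequency
    rw [if_pos hcase, mul_one]
    have hk0 : k = 0 := by
      rw [hkdef, hcase]
      push_cast
      ring
    rcases i with _ | ⟨n, l'⟩
    · show ‖∑ t ∈ Finset.range (2 ^ nb),
        (starRingEnd ℂ) (fourierFn nb k t) * (haarScaling nb t : ℂ)‖ ≤ Real.sqrt 2
      rw [hk0, scaling_abs_k0]
      exact hs2_ge1
    · show ‖∑ t ∈ Finset.range (2 ^ nb),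
        (starRingEnd ℂ) (fourierFn nb k t) * (haarWavelet nb n l' t : ℂ)‖ ≤ Real.sqrt 2
      exact le_trans (wavelet_abs_bound nb k hk2 n n.isLt l' l'.isLt).1 hs2_ge1
  · -- nonzero frequency
    rw [if_neg hcase]
    have hk0 : k ≠ 0 := by
      rw [hkdef]
      intro h
      apply hcase
      have : (l : ℤ) = 2 ^ (nb - 1) := by linarith [h]
      exact_mod_cast this
    have habsR : |(l : ℝ) - 2 ^ (nb - 1)| = |(k : ℝ)| := by
      congr 1
      rw [hkdef]
      push_cast
      ring
    rw [habsR, mul_min_of_nonneg _ _ (Real.sqrt_nonneg 2), mul_one]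
    apply le_min
    · rcases i with _ | ⟨n, l'⟩
      · show ‖∑ t ∈ Finset.range (2 ^ nb),
          (starRingEnd ℂ) (fourierFn nb k t) * (haarScaling nb t : ℂ)‖ ≤ Real.sqrt 2
        rw [scaling_abs_ne nb k hk0 hk2]
        positivity
      · show ‖∑ t ∈ Finset.range (2 ^ nb),
          (starRingEnd ℂ) (fourierFn nb k t) * (haarWavelet nb n l' t : ℂ)‖ ≤ Real.sqrt 2
        exact le_trans (wavelet_abs_bound nb k hk2 n n.isLt l' l'.isLt).1 hs2_ge1
    · rcases i with _ | ⟨n, l'⟩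
      · show ‖∑ t ∈ Finset.range (2 ^ nb),
          (starRingEnd ℂ) (fourierFn nb k t) * (haarScaling nb t : ℂ)‖ ≤
            Real.sqrt 2 * (Real.sqrt |(k : ℝ)|)⁻¹
        rw [scaling_abs_ne nb k hk0 hk2]
        positivity
      · exact (wavelet_abs_bound nb k hk2 n n.isLt l' l'.isLt).2 hk0
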